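/- Let z be a complex number with Im(z) > 0. Then (1/√π)·∫_0^{∞} exp(−τ²/4)·exp(izτ) dτ = exp(−z²) + (2i·z/√π)·∫_0^{1} exp(z²·(t² − 1)) dt. In other words, the integral (1/√π)∫_0^∞ e^{−τ²/4+izτ}dτ equals the Faddeeva function w(z) = e^{−z²}·(1 + (2i/√π)·∫_0^z e^{s²} ds), where the contour integral ∫_0^z e^{s²} ds along the straight segment from 0 to z is parametrized as z·∫_0^1 e^{z²t²} dt. -/

import Mathlib

open Real MeasureTheory
open Set Filter Metric


noncomputable def phi (a : ℂ) : ℂ :=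
  ∫ τ in Set.Ioi (0:ℝ), Complex.exp (-((τ : ℂ) / 2 + a) ^ 2)

noncomputable def eta (a : ℂ) : ℂ := ∫ t in (0:ℝ)..1, a * Complex.exp (-a ^ 2 * (t : ℂ) ^ 2)

lemma hasDerivAt_inner (t : ℝ) (a : ℂ) :
    HasDerivAt (fun a : ℂ => a * Complex.exp (-a ^ 2 * (t : ℂ) ^ 2))
      (Complex.exp (-a ^ 2 * (t : ℂ) ^ 2) * (1 - 2 * a ^ 2 * (t : ℂ) ^ 2)) a := by
  have h1 : HasDerivAt (fun a : ℂ => -a ^ 2 * (t : ℂ) ^ 2)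
      (-(2 * a ^ 1) * (t : ℂ) ^ 2) a := ((hasDerivAt_pow 2 a).neg.mul_const _)
  have h2 := h1.cexp
  have h3 := (hasDerivAt_id a).mul h2
  refine h3.congr_deriv ?_
  simp only [id_eq]
  ring

lemma hasDerivAt_eta (a : ℂ) : HasDerivAt eta (Complex.exp (-a ^ 2)) a := by
  set r : ℝ := ‖a‖ + 1 with hr
  have key := intervalIntegral.hasDerivAt_integral_of_dominated_loc_of_deriv_le
    (F := fun (x : ℂ) (t : ℝ) => x * Complex.exp (-x ^ 2 * (t : ℂ) ^ 2))
    (F' := fun (x : ℂ) (t : ℝ) =>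
      Complex.exp (-x ^ 2 * (t : ℂ) ^ 2) * (1 - 2 * x ^ 2 * (t : ℂ) ^ 2))
    (x₀ := a) (a := (0:ℝ)) (b := (1:ℝ)) (μ := volume)
    (bound := fun _ => (1 + 2 * r ^ 2) * Real.exp (r ^ 2)) (Metric.ball_mem_nhds a one_pos)
    ?meas ?int ?meas' ?bound ?bint ?diff
  case meas =>
    filter_upwards with x
    exact (Continuous.aestronglyMeasurable (by fun_prop))
  case int =>
    exact (Continuous.intervalIntegrable (by fun_prop) 0 1)
  case meas' =>
    exact (Continuous.aestronglyMeasurable (by fun_prop))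
  case bound =>
    filter_upwards with t ht x hx
    have hx' : ‖x‖ ≤ r := by
      have h := mem_ball_iff_norm.mp hx
      calc ‖x‖ = ‖a + (x - a)‖ := by ring_nf
        _ ≤ ‖a‖ + ‖x - a‖ := norm_add_le _ _
        _ ≤ r := by rw [hr]; linarith
    have ht' : |t| ≤ 1 := by
      rw [Set.uIoc_of_le (by norm_num : (0:ℝ) ≤ 1)] at ht
      rw [abs_le]; exact ⟨by linarith [ht.1], ht.2⟩
    have hre : (-x ^ 2 * (t : ℂ) ^ 2).re ≤ r ^ 2 := by
      have h1 : |(-x ^ 2 * (t : ℂ) ^ 2).re| ≤ ‖-x ^ 2 * (t : ℂ) ^ 2‖ :=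
        Complex.abs_re_le_norm _
      have h2 : ‖-x ^ 2 * (t : ℂ) ^ 2‖ = ‖x‖ ^ 2 * |t| ^ 2 := by
        simp [norm_mul, norm_pow, Complex.norm_real, Real.norm_eq_abs]
      rw [h2] at h1
      have h3 : ‖x‖ ^ 2 * |t| ^ 2 ≤ r ^ 2 := by
        have k1 := pow_le_pow_left₀ (norm_nonneg x) hx' 2
        have k2 := pow_le_pow_left₀ (abs_nonneg t) ht' 2
        nlinarith [sq_nonneg ‖x‖, sq_nonneg r]
      calc (-x ^ 2 * (t : ℂ) ^ 2).re ≤ |(-x ^ 2 * (t : ℂ) ^ 2).re| := le_abs_self _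
        _ ≤ r ^ 2 := h1.trans h3
    rw [norm_mul]
    have e1 : ‖Complex.exp (-x ^ 2 * (t : ℂ) ^ 2)‖ ≤ Real.exp (r ^ 2) := by
      rw [Complex.norm_exp]
      exact Real.exp_le_exp.mpr hre
    have e2 : ‖1 - 2 * x ^ 2 * (t : ℂ) ^ 2‖ ≤ 1 + 2 * r ^ 2 := by
      calc ‖1 - 2 * x ^ 2 * (t : ℂ) ^ 2‖
          ≤ ‖(1:ℂ)‖ + ‖2 * x ^ 2 * (t : ℂ) ^ 2‖ := norm_sub_le _ _
        _ ≤ 1 + 2 * r ^ 2 := by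
            simp only [norm_one, norm_mul, norm_pow, Complex.norm_real, Real.norm_eq_abs]
            have h2 : ‖(2:ℂ)‖ = 2 := by norm_num
            rw [h2]
            have k1 := pow_le_pow_left₀ (norm_nonneg x) hx' 2
            have k2 := pow_le_pow_left₀ (abs_nonneg t) ht' 2
            nlinarith [sq_nonneg ‖x‖, sq_nonneg r]
    calc ‖Complex.exp (-x ^ 2 * (t : ℂ) ^ 2)‖ * ‖1 - 2 * x ^ 2 * (t : ℂ) ^ 2‖
        ≤ Real.exp (r ^ 2) * (1 + 2 * r ^ 2) :=
          mul_le_mul e1 e2 (norm_nonneg _) (Real.exp_pos _).le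
      _ = (1 + 2 * r ^ 2) * Real.exp (r ^ 2) := by ring
  case bint => exact intervalIntegrable_const
  case diff =>
    filter_upwards with t ht x hx
    exact hasDerivAt_inner t x
  obtain ⟨hint, hderiv⟩ := key
  have hFTC : (∫ t in (0:ℝ)..1,
      Complex.exp (-a ^ 2 * (t : ℂ) ^ 2) * (1 - 2 * a ^ 2 * (t : ℂ) ^ 2))
      = Complex.exp (-a ^ 2) := by
    have hG : ∀ t : ℝ, HasDerivAt (fun t : ℝ => (t : ℂ) * Complex.exp (-a ^ 2 * (t : ℂ) ^ 2))
        (Complex.exp (-a ^ 2 * (t : ℂ) ^ 2) * (1 - 2 * a ^ 2 * (t : ℂ) ^ 2)) t := by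
      intro t
      have h1 : HasDerivAt (fun w : ℂ => -a ^ 2 * w ^ 2) (-a ^ 2 * (2 * (t : ℂ) ^ 1)) (t : ℂ) :=
        (hasDerivAt_pow 2 _).const_mul _
      have h3 := (hasDerivAt_id ((t : ℂ))).mul h1.cexp
      have h4 : HasDerivAt (fun w : ℂ => w * Complex.exp (-a ^ 2 * w ^ 2))
          (Complex.exp (-a ^ 2 * (t : ℂ) ^ 2) * (1 - 2 * a ^ 2 * (t : ℂ) ^ 2)) (t : ℂ) := by
        refine h3.congr_deriv ?_; simp only [id_eq]; ring
      exact h4.comp_ofReal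
    rw [intervalIntegral.integral_eq_sub_of_hasDerivAt (fun t _ => hG t) hint]
    norm_num
  rw [hFTC] at hderiv
  exact hderiv

lemma integrable_gauss_lin (c d : ℝ) :
    Integrable (fun x : ℝ => Real.exp (-(1/4) * x ^ 2 + c * x + d)) := by
  have h := (integrable_cexp_quadratic (b := (1/4 : ℂ))
      (by norm_num) ((c : ℂ)) ((d : ℂ))).norm
  refine h.congr (Filter.Eventually.of_forall fun x => ?_)
  have hq : -(1/4 : ℂ) * (x:ℂ) ^ 2 + (c:ℂ) * (x:ℂ) + (d:ℂ)
      = ((-(1/4) * x ^ 2 + c * x + d : ℝ) : ℂ) := by push_cast; ring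
  simp only [hq, ← Complex.ofReal_exp, Complex.norm_real, Real.norm_eq_abs]
  exact abs_of_pos (Real.exp_pos _)

lemma re_calc (τ : ℝ) (x : ℂ) : (-((τ : ℂ) / 2 + x) ^ 2).re
    = -((τ / 2 + x.re) ^ 2) + x.im ^ 2 := by
  have h : ((τ : ℂ) / 2 + x) = (((τ / 2 : ℝ) : ℂ) + x) := by push_cast; ring
  rw [h]
  simp [pow_two, Complex.mul_re, Complex.add_re, Complex.add_im]
  ring

lemma hasDerivAt_phi (a : ℂ) : HasDerivAt phi (-2 * Complex.exp (-a ^ 2)) a := by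
  set r : ℝ := ‖a‖ + 1 with hr
  have key := hasDerivAt_integral_of_dominated_loc_of_deriv_le
    (F := fun (x : ℂ) (τ : ℝ) => Complex.exp (-((τ : ℂ) / 2 + x) ^ 2))
    (F' := fun (x : ℂ) (τ : ℝ) =>
      Complex.exp (-((τ : ℂ) / 2 + x) ^ 2) * (-((τ : ℂ) + 2 * x)))
    (x₀ := a) (μ := volume.restrict (Set.Ioi (0:ℝ)))
    (bound := fun τ => Real.exp (-(1/4) * τ ^ 2 + (r + 1) * τ + (r ^ 2 + 2 * r)))
    (Metric.ball_mem_nhds a one_pos) ?meas ?int ?meas' ?bound ?bint ?diff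
  case meas =>
    filter_upwards with x
    exact (Continuous.aestronglyMeasurable (by fun_prop))
  case int =>
    have h := (integrable_cexp_quadratic (b := (1/4 : ℂ)) (by norm_num)
        (-a) (-a ^ 2)).integrableOn (s := Set.Ioi (0:ℝ))
    refine h.congr (Filter.Eventually.of_forall fun τ => ?_)
    have hq : -(1/4 : ℂ) * (τ:ℂ) ^ 2 + (-a) * (τ:ℂ) + (-a ^ 2)
        = -((τ : ℂ) / 2 + a) ^ 2 := by ring
    simp only [hq]
  case meas' =>
    exact (Continuous.aestronglyMeasurable (by fun_prop))
  case bound =>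
    filter_upwards [ae_restrict_mem measurableSet_Ioi] with τ hτ x hx
    have hτ0 : (0:ℝ) < τ := hτ
    have hx' : ‖x‖ ≤ r := by
      have h := mem_ball_iff_norm.mp hx
      calc ‖x‖ = ‖a + (x - a)‖ := by ring_nf
        _ ≤ ‖a‖ + ‖x - a‖ := norm_add_le _ _
        _ ≤ r := by rw [hr]; linarith
    have hxre : |x.re| ≤ r := (Complex.abs_re_le_norm x).trans hx'
    have hxim : |x.im| ≤ r := (Complex.abs_im_le_norm x).trans hx'
    rw [norm_mul, Complex.norm_exp, re_calc]
    have e1 : Real.exp (-((τ / 2 + x.re) ^ 2) + x.im ^ 2)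
        ≤ Real.exp (-(1/4) * τ ^ 2 + r * τ + r ^ 2) := by
      apply Real.exp_le_exp.mpr
      have h1 : -(τ * x.re) ≤ τ * r := by nlinarith [abs_le.mp hxre]
      have h2 : x.im ^ 2 ≤ r ^ 2 := by nlinarith [abs_le.mp hxim, abs_nonneg x.im]
      nlinarith [sq_nonneg x.re]
    have e2 : ‖-((τ : ℂ) + 2 * x)‖ ≤ Real.exp (τ + 2 * r) := by
      calc ‖-((τ : ℂ) + 2 * x)‖ = ‖(τ : ℂ) + 2 * x‖ := norm_neg _
        _ ≤ ‖(τ : ℂ)‖ + ‖2 * x‖ := norm_add_le _ _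
        _ ≤ τ + 2 * r := by
            rw [norm_mul]
            have h2 : ‖(2:ℂ)‖ = 2 := by norm_num
            rw [h2, Complex.norm_real, Real.norm_eq_abs, abs_of_pos hτ0]
            linarith
        _ ≤ Real.exp (τ + 2 * r) := by
            nlinarith [Real.add_one_le_exp (τ + 2 * r)]
    calc Real.exp (-((τ / 2 + x.re) ^ 2) + x.im ^ 2) * ‖-((τ : ℂ) + 2 * x)‖
        ≤ Real.exp (-(1/4) * τ ^ 2 + r * τ + r ^ 2) * Real.exp (τ + 2 * r) :=
          mul_le_mul e1 e2 (norm_nonneg _) (Real.exp_pos _).le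
      _ = Real.exp (-(1/4) * τ ^ 2 + (r + 1) * τ + (r ^ 2 + 2 * r)) := by
          rw [← Real.exp_add]; ring_nf
  case bint =>
    exact (integrable_gauss_lin (r + 1) (r ^ 2 + 2 * r)).restrict
  case diff =>
    filter_upwards with τ x hx
    have h1 : HasDerivAt (fun x : ℂ => ((τ : ℂ) / 2 + x)) 1 x :=
      (hasDerivAt_id x).const_add _
    have h2 : HasDerivAt (fun x : ℂ => -((τ : ℂ) / 2 + x) ^ 2)
        (-(2 * ((τ : ℂ) / 2 + x) ^ 1 * 1)) x := (h1.pow 2).neg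
    have h3 := h2.cexp
    refine h3.congr_deriv ?_
    ring
  obtain ⟨hint, hderiv⟩ := key
  have hFTC : (∫ τ in Set.Ioi (0:ℝ),
      Complex.exp (-((τ : ℂ) / 2 + a) ^ 2) * (-((τ : ℂ) + 2 * a)))
      = -2 * Complex.exp (-a ^ 2) := by
    have hG : ∀ τ : ℝ, HasDerivAt (fun τ : ℝ => 2 * Complex.exp (-((τ : ℂ) / 2 + a) ^ 2))
        (Complex.exp (-((τ : ℂ) / 2 + a) ^ 2) * (-((τ : ℂ) + 2 * a))) τ := by
      intro τ
      have h1 : HasDerivAt (fun w : ℂ => (w / 2 + a)) (1 / 2) (τ : ℂ) := by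
        simpa using ((hasDerivAt_id ((τ:ℂ))).div_const 2).add_const a
      have h2 := ((h1.pow 2).neg.cexp).const_mul (2 : ℂ)
      have h3 : HasDerivAt (fun w : ℂ => 2 * Complex.exp (-(w / 2 + a) ^ 2))
          (Complex.exp (-((τ : ℂ) / 2 + a) ^ 2) * (-((τ : ℂ) + 2 * a))) (τ : ℂ) := by
        refine h2.congr_deriv ?_; simp only [Pi.neg_apply, Pi.pow_apply]; push_cast; ring
      exact h3.comp_ofReal
    have htend : Tendsto (fun τ : ℝ => 2 * Complex.exp (-((τ : ℂ) / 2 + a) ^ 2))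
        atTop (nhds 0) := by
      have h1 : Tendsto (fun τ : ℝ => τ / 2 + a.re) atTop atTop :=
        tendsto_atTop_add_const_right _ _ (tendsto_id.atTop_div_const two_pos)
      have h2 : Tendsto (fun τ : ℝ => (τ / 2 + a.re) ^ 2) atTop atTop :=
        (tendsto_pow_atTop two_ne_zero).comp h1
      have h3 : Tendsto (fun τ : ℝ => -((τ / 2 + a.re) ^ 2) + a.im ^ 2) atTop atBot := by
        apply tendsto_atBot_add_const_right
        exact tendsto_neg_atTop_atBot.comp h2
      have h4 := Real.tendsto_exp_atBot.comp h3
      have h5 : Tendsto (fun τ : ℝ => 2 * Real.exp (-((τ / 2 + a.re) ^ 2) + a.im ^ 2))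
          atTop (nhds 0) := by
        have := h4.const_mul (2:ℝ)
        simpa using this
      refine squeeze_zero_norm (fun τ => le_of_eq ?_) h5
      simp only [norm_mul, Complex.norm_exp, re_calc, Complex.norm_two]
    have := integral_Ioi_of_hasDerivAt_of_tendsto' (a := (0:ℝ))
      (f := fun τ : ℝ => 2 * Complex.exp (-((τ : ℂ) / 2 + a) ^ 2))
      (fun x _ => hG x) hint htend
    rw [this]
    norm_num
  rw [hFTC] at hderiv
  exact hderiv

lemma psi_const (a : ℂ) : phi a + 2 * eta a = (Real.sqrt π : ℂ) := by
  have hψ : ∀ b : ℂ, HasDerivAt (fun b => phi b + 2 * eta b) 0 b := by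
    intro b
    have := (hasDerivAt_phi b).add ((hasDerivAt_eta b).const_mul 2)
    refine this.congr_deriv ?_
    ring
  have hconst : ∀ x y : ℂ, (fun b => phi b + 2 * eta b) x = (fun b => phi b + 2 * eta b) y := by
    apply is_const_of_fderiv_eq_zero (𝕜 := ℂ)
    · exact fun x => (hψ x).differentiableAt
    · intro x
      rw [(hψ x).hasFDerivAt.fderiv]
      refine ContinuousLinearMap.ext fun w => ?_
      simp
  have h0 : phi 0 + 2 * eta 0 = (Real.sqrt π : ℂ) := by
    have heta : eta 0 = 0 := by simp [eta]
    have hphi : phi 0 = (Real.sqrt π : ℂ) := by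
      have h1 : phi 0 = ∫ τ in Set.Ioi (0:ℝ), Complex.exp (-(1/4 : ℂ) * (τ:ℂ) ^ 2) := by
        unfold phi
        congr 1
        funext τ
        congr 1
        ring
      rw [h1, integral_gaussian_complex_Ioi (by norm_num)]
      have h2 : ((π : ℂ) / (1/4)) = (((4 * π : ℝ)) : ℂ) := by push_cast; ring
      have h3 : (1/2 : ℂ) = ((1/2 : ℝ) : ℂ) := by norm_num
      rw [h2, h3, ← Complex.ofReal_cpow (by positivity), ← Real.sqrt_eq_rpow]
      rw [show (4 * π : ℝ) = 2^2 * π by ring, Real.sqrt_mul (by positivity),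
        Real.sqrt_sq (by norm_num : (0:ℝ) ≤ 2)]
      push_cast
      ring
    rw [heta, hphi]; ring
  calc phi a + 2 * eta a = phi 0 + 2 * eta 0 := hconst a 0
    _ = (Real.sqrt π : ℂ) := h0

/-- For `z : ℂ` with `Im z > 0`,
`(1/√π)·∫_0^∞ exp(−τ²/4)·exp(izτ) dτ = exp(−z²) + (2iz/√π)·∫_0^1 exp(z²(t² − 1)) dt`;
in other words, it equals the Faddeeva function
`w(z) = e^{−z²}·(1 + (2i/√π)·z·∫_0^1 e^{z²t²} dt)`. -/
theorem faddeeva_integral_rep (z : ℂ) (hz : 0 < z.im) :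
    (1 / (Real.sqrt π : ℂ)) *
      ∫ τ in Set.Ioi (0:ℝ),
        Complex.exp (-(τ : ℂ) ^ 2 / 4) * Complex.exp (Complex.I * z * τ) =
      Complex.exp (-z ^ 2) +
        (2 * Complex.I * z / (Real.sqrt π : ℂ)) *
          ∫ t in (0:ℝ)..1, Complex.exp (z ^ 2 * ((t : ℂ) ^ 2 - 1)) ∧
    (1 / (Real.sqrt π : ℂ)) *
      ∫ τ in Set.Ioi (0:ℝ),
        Complex.exp (-(τ : ℂ) ^ 2 / 4) * Complex.exp (Complex.I * z * τ) =
      Complex.exp (-z ^ 2) *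
        (1 + (2 * Complex.I / (Real.sqrt π : ℂ)) *
          (z * ∫ t in (0:ℝ)..1, Complex.exp (z ^ 2 * (t : ℂ) ^ 2))) := by
  have hs : (Real.sqrt π : ℂ) ≠ 0 := by
    simp only [ne_eq, Complex.ofReal_eq_zero]
    positivity
  set J := ∫ t in (0:ℝ)..1, Complex.exp (z ^ 2 * (t : ℂ) ^ 2) with hJ
  have hA : (∫ τ in Set.Ioi (0:ℝ),
        Complex.exp (-(τ : ℂ) ^ 2 / 4) * Complex.exp (Complex.I * z * τ))
      = Complex.exp (-z ^ 2) * phi (-Complex.I * z) := by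
    unfold phi
    rw [← integral_const_mul]
    refine integral_congr_ae (Filter.Eventually.of_forall fun τ => ?_)
    simp only [← Complex.exp_add]
    congr 1
    linear_combination z ^ 2 * Complex.I_sq
  have hEta : eta (-Complex.I * z) = (-Complex.I * z) * J := by
    unfold eta
    rw [hJ, ← intervalIntegral.integral_const_mul]
    refine intervalIntegral.integral_congr fun t _ => ?_
    congr 2
    linear_combination (-(z ^ 2 * (t : ℂ) ^ 2)) * Complex.I_sq
  have hPhi : phi (-Complex.I * z) = (Real.sqrt π : ℂ) + 2 * Complex.I * z * J := by
    have h := psi_const (-Complex.I * z)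
    rw [hEta] at h
    linear_combination h
  have hT : (∫ τ in Set.Ioi (0:ℝ),
        Complex.exp (-(τ : ℂ) ^ 2 / 4) * Complex.exp (Complex.I * z * τ))
      = Complex.exp (-z ^ 2) * ((Real.sqrt π : ℂ) + 2 * Complex.I * z * J) := by
    rw [hA, hPhi]
  constructor
  · have hJ1 : (∫ t in (0:ℝ)..1, Complex.exp (z ^ 2 * ((t : ℂ) ^ 2 - 1)))
        = Complex.exp (-z ^ 2) * J := by
      rw [hJ, ← intervalIntegral.integral_const_mul]
      refine intervalIntegral.integral_congr fun t _ => ?_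
      rw [← Complex.exp_add]
      congr 1
      ring
    rw [hT, hJ1]
    field_simp
  · rw [hT]
    field_simp
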